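/- Let R be a commutative based ring, with upper central series R = R^(0) ⊇ R^(1) ⊇ ⋯ defined by R^(n) = (R^(n−1))_ad, and lower central series ℤ1 = R_(0) ⊆ R_(1) ⊆ ⋯ defined by R_(n) = (R_(n−1))^co. Then for every n ≥ 0: R^(n) = ℤ1 if and only if R_(n) = R; and when this is the case, R^(k) ⊆ R_(n−k) for all 0 ≤ k ≤ n. -/

import Mathlib

/-- A *based ring* (fusion ring). -/
structure BasedRing (ι R : Type*) [Fintype ι] [DecidableEq ι] [Ring R] where
  b : Module.Basis ι ℤ R
  unit : ι
  b_unit : b unit = 1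
  star : ι → ι
  star_invol : ∀ i, star (star i) = i
  c_nonneg : ∀ i j k, 0 ≤ b.repr (b i * b j) k
  adj_right : ∀ i j k, b.repr (b i * b j) k = b.repr (b k * b (star j)) i
  adj_left : ∀ i j k, b.repr (b i * b j) k = b.repr (b (star i) * b k) j

namespace BasedRing

variable {ι R : Type*} [Fintype ι] [DecidableEq ι] [Ring R] (BR : BasedRing ι R)

/-- `x` (with nonnegative coordinates) *contains* the basic element `k`. -/
def contains (x : R) (k : ι) : Prop := 0 < BR.b.repr x k

/-- The `ℤ`-span of a (finite) set of basic elements. -/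
def spanOf (C : Finset ι) : Submodule ℤ R := Submodule.span ℤ (BR.b '' (↑C : Set ι))

open Classical in
/-- The adjoint subring `S_ad` of the based subring `S` spanned by `C`: the
basic elements contained in some power (`n ≥ 1`) of `Σ_{X basic in S} X X*`. -/
noncomputable def adOf (C : Finset ι) : Finset ι :=
  Finset.univ.filter fun k => ∃ n : ℕ, 1 ≤ n ∧
    BR.contains ((∑ i ∈ C, BR.b i * BR.b (BR.star i)) ^ n) k

open Classical in
/-- The commutator `S^co` of the based subring `S` spanned by `C`: the basic
elements `Y` with `YY* ∈ S`. -/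
noncomputable def coOf (C : Finset ι) : Finset ι :=
  Finset.univ.filter fun j => BR.b j * BR.b (BR.star j) ∈ BR.spanOf C

/-- The upper central series: `R^(0) = R`, `R^(n) = (R^(n-1))_ad`. -/
noncomputable def upper : ℕ → Finset ι
  | 0 => Finset.univ
  | n + 1 => BR.adOf (upper n)

/-- The lower central series: `R_(0) = ℤ1`, `R_(n) = (R_(n-1))^co`. -/
noncomputable def lower : ℕ → Finset ι
  | 0 => {BR.unit}
  | n + 1 => BR.coOf (lower n)

end BasedRing
namespace BasedRing

variable {ι R : Type*} [Fintype ι] [DecidableEq ι] [Ring R] (BR : BasedRing ι R)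

lemma repr_mul (x y : R) (l : ι) :
    BR.b.repr (x * y) l =
      ∑ i, ∑ j, BR.b.repr x i * BR.b.repr y j * BR.b.repr (BR.b i * BR.b j) l := by
  have hx : x = ∑ i, BR.b.repr x i • BR.b i := (BR.b.sum_repr x).symm
  have hy : y = ∑ j, BR.b.repr y j • BR.b j := (BR.b.sum_repr y).symm
  conv_lhs => rw [hx, hy]
  rw [Finset.sum_mul]
  simp only [Finset.mul_sum, smul_mul_assoc, mul_smul_comm, map_sum, Finsupp.finset_sum_apply,
    map_smul, Finsupp.smul_apply, smul_eq_mul]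
  exact Finset.sum_congr rfl fun i _ => Finset.sum_congr rfl fun j _ => by ring

lemma mem_spanOf {C : Finset ι} {x : R} :
    x ∈ BR.spanOf C ↔ ∀ k, k ∉ C → BR.b.repr x k = 0 := by
  rw [spanOf, Module.Basis.mem_span_image]
  constructor
  · intro h k hk
    by_contra hne
    exact hk (h (Finsupp.mem_support_iff.2 hne))
  · intro h k hk
    by_contra hkC
    exact (Finsupp.mem_support_iff.1 hk) (h k hkC)

lemma b_mem_spanOf {C : Finset ι} {i : ι} (hi : i ∈ C) : BR.b i ∈ BR.spanOf C :=
  Submodule.subset_span ⟨i, hi, rfl⟩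

lemma star_unit : BR.star BR.unit = BR.unit := by
  have h := BR.adj_left BR.unit BR.unit BR.unit
  rw [BR.b_unit, one_mul, mul_one] at h
  by_contra hne
  rw [← BR.b_unit, Module.Basis.repr_self, Module.Basis.repr_self, Finsupp.single_eq_same,
    Finsupp.single_eq_of_ne (Ne.symm hne)] at h
  exact one_ne_zero h

lemma repr_bbstar_unit (i : ι) : BR.b.repr (BR.b i * BR.b (BR.star i)) BR.unit = 1 := by
  rw [BR.adj_right, BR.star_invol, BR.b_unit, one_mul, Module.Basis.repr_self, Finsupp.single_eq_same]

lemma c_star_star (i j k : ι) :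
    BR.b.repr (BR.b (BR.star j) * BR.b (BR.star i)) (BR.star k) =
      BR.b.repr (BR.b i * BR.b j) k := by
  have h1 := BR.adj_right i j k
  have h2 := BR.adj_left k (BR.star j) i
  have h3 := BR.adj_right (BR.star j) (BR.star i) (BR.star k)
  rw [BR.star_invol] at h3
  rw [h1, h2, h3]

/-- generic multiplicative closedness from basis products -/
lemma mul_mem_spanOf {C : Finset ι}
    (h : ∀ i ∈ C, ∀ j ∈ C, BR.b i * BR.b j ∈ BR.spanOf C)
    {x y : R} (hx : x ∈ BR.spanOf C) (hy : y ∈ BR.spanOf C) :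
    x * y ∈ BR.spanOf C := by
  rw [mem_spanOf] at hx hy ⊢
  intro k hk
  rw [repr_mul]
  refine Finset.sum_eq_zero fun i _ => Finset.sum_eq_zero fun j _ => ?_
  by_cases hi : i ∈ C
  · by_cases hj : j ∈ C
    · rw [(BR.mem_spanOf).mp (h i hi j hj) k hk, mul_zero]
    · rw [hy j hj, mul_zero, zero_mul]
  · rw [hx i hi, zero_mul, zero_mul]

lemma unit_mem_lower : ∀ m, BR.unit ∈ BR.lower m := by
  classical
  intro m
  induction m with
  | zero => simp [lower]
  | succ m ih =>
    rw [lower, coOf, Finset.mem_filter]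
    refine ⟨Finset.mem_univ _, ?_⟩
    rw [BR.star_unit, BR.b_unit, one_mul, ← BR.b_unit]
    exact BR.b_mem_spanOf ih

lemma unit_mem_upper : ∀ k, BR.unit ∈ BR.upper k := by
  classical
  intro k
  induction k with
  | zero => exact Finset.mem_univ _
  | succ k ih =>
    rw [upper, adOf, Finset.mem_filter]
    refine ⟨Finset.mem_univ _, 1, le_refl 1, ?_⟩
    rw [contains, pow_one, map_sum, Finsupp.finset_sum_apply]
    refine Finset.sum_pos' (fun i _ => ?_) ⟨BR.unit, ih, ?_⟩
    · exact BR.c_nonneg _ _ _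
    · rw [BR.repr_bbstar_unit]; exact one_pos

lemma lower_mul_closed (hcomm : ∀ x y : R, x * y = y * x) :
    ∀ m, ∀ x ∈ BR.spanOf (BR.lower m), ∀ y ∈ BR.spanOf (BR.lower m),
      x * y ∈ BR.spanOf (BR.lower m) := by
  classical
  intro m
  induction m with
  | zero =>
    intro x hx y hy
    refine BR.mul_mem_spanOf (fun i hi j hj => ?_) hx hy
    simp only [lower, Finset.mem_singleton] at hi hj
    subst hi; subst hj
    rw [BR.b_unit, one_mul, ← BR.b_unit]
    exact BR.b_mem_spanOf (by simp [lower])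
  | succ m ih =>
    intro x hx y hy
    refine BR.mul_mem_spanOf (fun j hj j' hj' => ?_) hx hy
    rw [lower, coOf, Finset.mem_filter] at hj hj'
    have hE : (BR.b j * BR.b (BR.star j)) * (BR.b j' * BR.b (BR.star j')) ∈
        BR.spanOf (BR.lower m) := ih _ hj.2 _ hj'.2
    rw [mem_spanOf]
    intro k hk
    by_contra hne
    have hkpos : 0 < BR.b.repr (BR.b j * BR.b j') k :=
      lt_of_le_of_ne (BR.c_nonneg _ _ _) (Ne.symm hne)
    apply hk
    rw [lower, coOf, Finset.mem_filter]
    refine ⟨Finset.mem_univ _, ?_⟩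
    rw [mem_spanOf]
    intro l hl
    by_contra hne2
    have hlpos : 0 < BR.b.repr (BR.b k * BR.b (BR.star k)) l :=
      lt_of_le_of_ne (BR.c_nonneg _ _ _) (Ne.symm hne2)
    -- rearrange E
    have hrearr : (BR.b j * BR.b (BR.star j)) * (BR.b j' * BR.b (BR.star j')) =
        (BR.b j * BR.b j') * (BR.b (BR.star j) * BR.b (BR.star j')) := by
      rw [mul_assoc, mul_assoc, ← mul_assoc (BR.b (BR.star j)), hcomm (BR.b (BR.star j)) (BR.b j'),
        mul_assoc]
    have hEzero : BR.b.repr ((BR.b j * BR.b (BR.star j)) * (BR.b j' * BR.b (BR.star j'))) l = 0 :=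
      (BR.mem_spanOf).mp hE l hl
    rw [hrearr, repr_mul] at hEzero
    have hpos : 0 < ∑ a, ∑ c, BR.b.repr (BR.b j * BR.b j') a *
        BR.b.repr (BR.b (BR.star j) * BR.b (BR.star j')) c *
        BR.b.repr (BR.b a * BR.b c) l := by
      refine Finset.sum_pos' (fun a _ => Finset.sum_nonneg fun c _ => ?_) ⟨k, Finset.mem_univ k, ?_⟩
      · exact mul_nonneg (mul_nonneg (BR.c_nonneg _ _ _) (BR.c_nonneg _ _ _)) (BR.c_nonneg _ _ _)
      · refine Finset.sum_pos' (fun c _ => ?_) ⟨BR.star k, Finset.mem_univ _, ?_⟩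
        · exact mul_nonneg (mul_nonneg (BR.c_nonneg _ _ _) (BR.c_nonneg _ _ _)) (BR.c_nonneg _ _ _)
        · have hw' : BR.b.repr (BR.b (BR.star j) * BR.b (BR.star j')) (BR.star k) =
              BR.b.repr (BR.b j * BR.b j') k := by
            rw [BR.c_star_star j' j k, hcomm (BR.b j') (BR.b j)]
          rw [hw']
          exact mul_pos (mul_pos hkpos hkpos) hlpos
    rw [hEzero] at hpos
    exact lt_irrefl 0 hpos

lemma adOf_subset_iff (C T : Finset ι)
    (hT : ∀ x ∈ BR.spanOf T, ∀ y ∈ BR.spanOf T, x * y ∈ BR.spanOf T) :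
    BR.adOf C ⊆ T ↔ C ⊆ BR.coOf T := by
  classical
  constructor
  · intro h i hi
    rw [coOf, Finset.mem_filter]
    refine ⟨Finset.mem_univ _, ?_⟩
    rw [mem_spanOf]
    intro k hk
    by_contra hne
    have hkpos : 0 < BR.b.repr (BR.b i * BR.b (BR.star i)) k :=
      lt_of_le_of_ne (BR.c_nonneg _ _ _) (Ne.symm hne)
    apply hk
    apply h
    rw [adOf, Finset.mem_filter]
    refine ⟨Finset.mem_univ _, 1, le_refl 1, ?_⟩
    rw [contains, pow_one, map_sum, Finsupp.finset_sum_apply]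
    exact Finset.sum_pos' (fun i' _ => BR.c_nonneg _ _ _) ⟨i, hi, hkpos⟩
  · intro h k hk
    rw [adOf, Finset.mem_filter] at hk
    obtain ⟨-, n, hn1, hcont⟩ := hk
    have hS : (∑ i ∈ C, BR.b i * BR.b (BR.star i)) ∈ BR.spanOf T := by
      refine Submodule.sum_mem _ (fun i hi => ?_)
      have := h hi
      rw [coOf, Finset.mem_filter] at this
      exact this.2
    have hpow : ∀ n, 1 ≤ n → (∑ i ∈ C, BR.b i * BR.b (BR.star i)) ^ n ∈ BR.spanOf T := by
      intro n hn
      induction n, hn using Nat.le_induction with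
      | base => rw [pow_one]; exact hS
      | succ n hn ih => rw [pow_succ]; exact hT _ ih _ hS
    by_contra hkT
    rw [contains] at hcont
    rw [(BR.mem_spanOf).mp (hpow n hn1) k hkT] at hcont
    exact lt_irrefl 0 hcont

lemma key (hcomm : ∀ x y : R, x * y = y * x) :
    ∀ b a : ℕ, (BR.upper (a + b) ⊆ BR.lower 0 ↔ BR.upper a ⊆ BR.lower b) := by
  classical
  intro b
  induction b with
  | zero => intro a; rfl
  | succ b ih =>
    intro a
    have h1 : a + (b + 1) = (a + 1) + b := by omega
    rw [h1, ih (a + 1)]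
    show BR.adOf (BR.upper a) ⊆ BR.lower b ↔ _
    rw [BR.adOf_subset_iff _ _ (BR.lower_mul_closed hcomm b)]
    rfl

end BasedRing

/-- Let `R` be a commutative based ring with upper central series
`R = R^(0) ⊇ R^(1) ⊇ ⋯` (iterated adjoint subrings) and lower central series
`ℤ1 = R_(0) ⊆ R_(1) ⊆ ⋯` (iterated commutators). Then for every `n ≥ 0`:
`R^(n) = ℤ1` if and only if `R_(n) = R`, and when this is the case,
`R^(k) ⊆ R_(n-k)` for all `0 ≤ k ≤ n`. -/
theorem upper_eq_one_iff_lower_eq_top {ι R : Type*} [Fintype ι] [DecidableEq ι]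
    [Ring R] (BR : BasedRing ι R) (hcomm : ∀ x y : R, x * y = y * x) :
    ∀ n : ℕ,
      (BR.upper n = {BR.unit} ↔ BR.lower n = Finset.univ) ∧
      (BR.upper n = {BR.unit} → ∀ k ≤ n, BR.upper k ⊆ BR.lower (n - k)) := by
  intro n
  have hneq : ∀ m, (BR.upper m = {BR.unit} ↔ BR.upper m ⊆ BR.lower 0) := by
    intro m
    constructor
    · intro h; rw [h]; exact subset_rfl
    · intro h
      exact Finset.Subset.antisymm h (Finset.singleton_subset_iff.2 (BR.unit_mem_upper m))
  constructor
  · rw [hneq n]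
    have hk := BR.key hcomm n 0
    rw [Nat.zero_add] at hk
    rw [hk]
    show Finset.univ ⊆ BR.lower n ↔ _
    rw [Finset.univ_subset_iff]
  · intro h k hk
    have hn : BR.upper n ⊆ BR.lower 0 := (hneq n).1 h
    have hkey := BR.key hcomm (n - k) k
    rw [Nat.add_sub_cancel' hk] at hkey
    exact hkey.1 hn
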